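/- Let F be an algebraically closed field and f(x,y) = Σ_{i+j ≤ d} x^i y^j with d ≥ 1. If (x,y) ∈ F² satisfies f(x,y) = 0, ∂f/∂x(x,y) = 0, and ∂f/∂y(x,y) = 0, then (d+1)x^{d+1} = x^d + x^{d-1} + ⋯ + 1 and (d+1)y^{d+1} = y^d + ⋯ + 1 in F. -/

import Mathlib

open Finset in
lemma lemA' {R : Type*} [CommRing R] (x y : R) : ∀ n : ℕ,
    (x - y) * (∑ i ∈ range (n+1), ∑ j ∈ range (n+1-i), x^i * y^j)
    = ∑ k ∈ range (n+1), (x^(k+1) - y^(k+1)) := by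
  intro n
  induction n with
  | zero => simp
  | succ n ih =>
    have hsplit : (∑ i ∈ range (n+2), ∑ j ∈ range (n+2-i), x^i * y^j)
        = (∑ i ∈ range (n+1), ∑ j ∈ range (n+1-i), x^i * y^j)
          + ∑ i ∈ range (n+2), x^i * y^(n+1-i) := by
      rw [sum_range_succ, sum_range_succ (f := fun i => x^i * y^(n+1-i))]
      have h1 : ∀ i ∈ range (n+1), (∑ j ∈ range (n+2-i), x^i * y^j)
          = (∑ j ∈ range (n+1-i), x^i * y^j) + x^i * y^(n+1-i) := by
        intro i hi
        have hi' := Finset.mem_range.mp hi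
        have : n + 2 - i = (n + 1 - i) + 1 := by omega
        rw [this, sum_range_succ]
      rw [sum_congr rfl h1, sum_add_distrib]
      have e1 : n + 2 - (n + 1) = 1 := by omega
      rw [e1, sum_range_one]
      have e2 : n + 1 - (n + 1) = 0 := by omega
      rw [e2]
      abel
    rw [hsplit, mul_add, ih]
    have h2 : (x - y) * ∑ i ∈ range (n+2), x^i * y^(n+1-i) = x^(n+2) - y^(n+2) := by
      rw [mul_comm]
      convert geom_sum₂_mul x y (n+2) using 2
      rfl
    rw [h2]
    exact (sum_range_succ _ (n+1)).symm

open Finset in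
lemma lemB' {R : Type*} [CommRing R] (x : R) : ∀ n : ℕ,
    (x - 1) * ∑ k ∈ range (n+1), ((k:R)+1) * x^k
    = ((n:R)+1) * x^(n+1) - ∑ i ∈ range (n+1), x^i := by
  intro n
  induction n with
  | zero => simp
  | succ n ih =>
    rw [sum_range_succ, mul_add, ih, sum_range_succ (f := fun i => x^i) (n+1)]
    push_cast
    ring

theorem stmt2 (F : Type*) [Field F] [IsAlgClosed F] (d : ℕ) (hd : 1 ≤ d) (x y : F)
    (f : MvPolynomial (Fin 2) F)
    (hf : f = ∑ i ∈ Finset.range (d + 1), ∑ j ∈ Finset.range (d + 1 - i),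
      MvPolynomial.X 0 ^ i * MvPolynomial.X 1 ^ j)
    (h0 : MvPolynomial.eval ![x, y] f = 0)
    (hx : MvPolynomial.eval ![x, y] (MvPolynomial.pderiv 0 f) = 0)
    (hy : MvPolynomial.eval ![x, y] (MvPolynomial.pderiv 1 f) = 0) :
    (d + 1 : F) * x ^ (d + 1) = ∑ i ∈ Finset.range (d + 1), x ^ i ∧
    (d + 1 : F) * y ^ (d + 1) = ∑ i ∈ Finset.range (d + 1), y ^ i := by
  have key : (MvPolynomial.X 0 - MvPolynomial.X 1) * f
      = ∑ k ∈ Finset.range (d+1),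
        ((MvPolynomial.X 0 : MvPolynomial (Fin 2) F)^(k+1) - MvPolynomial.X 1^(k+1)) := by
    rw [hf]; exact lemA' _ _ d
  have hx' : ∑ k ∈ Finset.range (d+1), ((k:F)+1) * x^k = 0 := by
    have h := congrArg (MvPolynomial.eval ![x,y]) (congrArg (MvPolynomial.pderiv 0) key)
    simp [MvPolynomial.pderiv_mul, MvPolynomial.pderiv_pow, MvPolynomial.pderiv_X_self,
      MvPolynomial.pderiv_X_of_ne, h0, hx, map_sub, map_sum] at h
    exact h.symm
  have hy' : ∑ k ∈ Finset.range (d+1), ((k:F)+1) * y^k = 0 := by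
    have h := congrArg (MvPolynomial.eval ![x,y]) (congrArg (MvPolynomial.pderiv 1) key)
    simp [MvPolynomial.pderiv_mul, MvPolynomial.pderiv_pow, MvPolynomial.pderiv_X_self,
      MvPolynomial.pderiv_X_of_ne, h0, hy, map_sub, map_sum] at h
    exact h
  constructor
  · linear_combination -lemB' x d + (x - 1) * hx'
  · linear_combination -lemB' y d + (y - 1) * hy'
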